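/- Let Ω ⊆ ℝ³ be open and ν₁, ν₂ : Ω → ℝ be C¹ functions with ν₁² + ν₂² = 1 on Ω and Xν₁ + Yν₂ = 0 on Ω (vanishing horizontal mean curvature). Let γ = (x,y,t) : I → Ω be a C¹ curve with ẋ = −ν₂∘γ, ẏ = ν₁∘γ and ṫ = 2(yẋ − xẏ) on I (an integral curve of the horizontal vector field 𝕁ν^h = −ν₂X + ν₁Y). Then γ is a Euclidean straight line: γ(s) = γ(s₀) + (s − s₀)·γ̇(s₀) for all s, s₀ ∈ I. -/

import Mathlib

/-- The Heisenberg horizontal vector field X = ∂/∂x + 2y ∂/∂t acting on a function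
of (x,y,t) ∈ ℝ³. -/
noncomputable def Xop (f : ℝ × ℝ × ℝ → ℝ) (p : ℝ × ℝ × ℝ) : ℝ :=
  deriv (fun x => f (x, p.2.1, p.2.2)) p.1
    + 2 * p.2.1 * deriv (fun t => f (p.1, p.2.1, t)) p.2.2

/-- The Heisenberg horizontal vector field Y = ∂/∂y − 2x ∂/∂t acting on a function
of (x,y,t) ∈ ℝ³. -/
noncomputable def Yop (f : ℝ × ℝ × ℝ → ℝ) (p : ℝ × ℝ × ℝ) : ℝ :=
  deriv (fun y => f (p.1, y, p.2.2)) p.2.1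
    - 2 * p.1 * deriv (fun t => f (p.1, p.2.1, t)) p.2.2


lemma const_of_deriv_zero {I : Set ℝ} (hconn : I.OrdConnected)
    {f : ℝ → ℝ} (hf : ∀ s ∈ I, HasDerivAt f 0 s) :
    ∀ s ∈ I, ∀ s₀ ∈ I, f s = f s₀ := by
  have key : ∀ a ∈ I, ∀ b ∈ I, a ≤ b → f b = f a := by
    intro a ha b hb hab
    have hsub : Set.Icc a b ⊆ I := hconn.out ha hb
    exact constant_of_has_deriv_right_zero
      (fun z hz => (hf z (hsub hz)).continuousAt.continuousWithinAt)
      (fun z hz => (hf z (hsub (Set.Ico_subset_Icc_self hz))).hasDerivWithinAt)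
      b (Set.right_mem_Icc.2 hab)
  intro s hs s₀ hs₀
  rcases le_total s s₀ with h | h
  · exact (key s hs s₀ hs₀ h).symm
  · exact key s₀ hs₀ s hs h

lemma linear_of_deriv_const {I : Set ℝ} (hconn : I.OrdConnected)
    {f : ℝ → ℝ} {c : ℝ} (hf : ∀ s ∈ I, HasDerivAt f c s) :
    ∀ s ∈ I, ∀ s₀ ∈ I, f s = f s₀ + (s - s₀) * c := by
  have h := const_of_deriv_zero hconn (f := fun s => f s - c * s) ?_
  · intro s hs s₀ hs₀
    have := h s hs s₀ hs₀
    linarith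
  · intro s hs
    have h2 := (hf s hs).sub ((hasDerivAt_id' s).const_mul c)
    rw [mul_one, sub_self] at h2
    exact h2

lemma clm_apply3 (A : ℝ × ℝ × ℝ →L[ℝ] ℝ) (a b c : ℝ) :
    A (a, b, c) = a * A (1, 0, 0) + b * A (0, 1, 0) + c * A (0, 0, 1) := by
  have h : ((a, b, c) : ℝ × ℝ × ℝ) = a • ((1:ℝ), (0:ℝ), (0:ℝ)) + b • (0, 1, 0) + c • (0, 0, 1) := by
    simp [Prod.ext_iff]
  rw [h, map_add, map_add, map_smul, map_smul, map_smul]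
  simp [smul_eq_mul]
-- slice curves
lemma curve1 (p : ℝ × ℝ × ℝ) :
    HasDerivAt (fun a : ℝ => ((a, p.2.1, p.2.2) : ℝ × ℝ × ℝ)) (1, 0, 0) p.1 :=
  (hasDerivAt_id p.1).prodMk (hasDerivAt_const _ _)

lemma curve2 (p : ℝ × ℝ × ℝ) :
    HasDerivAt (fun a : ℝ => ((p.1, a, p.2.2) : ℝ × ℝ × ℝ)) (0, 1, 0) p.2.1 :=
  (hasDerivAt_const _ _).prodMk ((hasDerivAt_id _).prodMk (hasDerivAt_const _ _))

lemma curve3 (p : ℝ × ℝ × ℝ) :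
    HasDerivAt (fun a : ℝ => ((p.1, p.2.1, a) : ℝ × ℝ × ℝ)) (0, 0, 1) p.2.2 :=
  (hasDerivAt_const _ _).prodMk ((hasDerivAt_const _ _).prodMk (hasDerivAt_id _))

lemma Xop_eq {f : ℝ × ℝ × ℝ → ℝ} {A : ℝ × ℝ × ℝ →L[ℝ] ℝ} {p : ℝ × ℝ × ℝ}
    (hA : HasFDerivAt f A p) :
    Xop f p = A (1, 0, 0) + 2 * p.2.1 * A (0, 0, 1) := by
  have h1 : deriv (fun a => f (a, p.2.1, p.2.2)) p.1 = A (1, 0, 0) :=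
    (hA.comp_hasDerivAt p.1 (curve1 p)).deriv
  have h3 : deriv (fun a => f (p.1, p.2.1, a)) p.2.2 = A (0, 0, 1) :=
    (hA.comp_hasDerivAt p.2.2 (curve3 p)).deriv
  rw [Xop, h1, h3]

lemma Yop_eq {f : ℝ × ℝ × ℝ → ℝ} {A : ℝ × ℝ × ℝ →L[ℝ] ℝ} {p : ℝ × ℝ × ℝ}
    (hA : HasFDerivAt f A p) :
    Yop f p = A (0, 1, 0) - 2 * p.1 * A (0, 0, 1) := by
  have h2 : deriv (fun a => f (p.1, a, p.2.2)) p.2.1 = A (0, 1, 0) :=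
    (hA.comp_hasDerivAt p.2.1 (curve2 p)).deriv
  have h3 : deriv (fun a => f (p.1, p.2.1, a)) p.2.2 = A (0, 0, 1) :=
    (hA.comp_hasDerivAt p.2.2 (curve3 p)).deriv
  rw [Yop, h2, h3]

-- derivative of the unit condition along any curve through Ω
lemma unit_dir {Ω : Set (ℝ × ℝ × ℝ)} (hΩ : IsOpen Ω) {ν₁ ν₂ : ℝ × ℝ × ℝ → ℝ}
    (hunit : ∀ p ∈ Ω, ν₁ p ^ 2 + ν₂ p ^ 2 = 1)
    {c : ℝ → ℝ × ℝ × ℝ} {a₀ : ℝ} {w : ℝ × ℝ × ℝ}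
    (hp : c a₀ ∈ Ω)
    {A₁ A₂ : ℝ × ℝ × ℝ →L[ℝ] ℝ}
    (h₁ : HasFDerivAt ν₁ A₁ (c a₀)) (h₂ : HasFDerivAt ν₂ A₂ (c a₀))
    (hc : HasDerivAt c w a₀) :
    ν₁ (c a₀) * A₁ w + ν₂ (c a₀) * A₂ w = 0 := by
  have hev : ∀ᶠ a in nhds a₀, c a ∈ Ω :=
    hc.continuousAt.preimage_mem_nhds (hΩ.mem_nhds hp)
  have e₁ : HasDerivAt (fun a => ν₁ (c a)) (A₁ w) a₀ := h₁.comp_hasDerivAt a₀ hc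
  have e₂ : HasDerivAt (fun a => ν₂ (c a)) (A₂ w) a₀ := h₂.comp_hasDerivAt a₀ hc
  have hg := (e₁.pow 2).add (e₂.pow 2)
  have hzero : deriv (fun a => ν₁ (c a) ^ 2 + ν₂ (c a) ^ 2) a₀ = 0 := by
    have heq : (fun a => ν₁ (c a) ^ 2 + ν₂ (c a) ^ 2) =ᶠ[nhds a₀] fun _ => 1 := by
      filter_upwards [hev] with a ha using hunit _ ha
    rw [heq.deriv_eq]; simp
  have hd : deriv (fun a => ν₁ (c a) ^ 2 + ν₂ (c a) ^ 2) a₀ = _ := hg.deriv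
  rw [hzero] at hd
  push_cast at hd
  nlinarith [hd]

/-- if ν₁² + ν₂² = 1 and Xν₁ + Yν₂ = 0 on an open Ω ⊆ ℝ³ (vanishing
horizontal mean curvature), then every integral curve of 𝕁ν^h = −ν₂X + ν₁Y contained in Ω
is a Euclidean straight line. -/
theorem stmt_5 (Ω : Set (ℝ × ℝ × ℝ)) (hΩ : IsOpen Ω)
    (ν₁ ν₂ : ℝ × ℝ × ℝ → ℝ)
    (hν₁ : ContDiffOn ℝ 1 ν₁ Ω) (hν₂ : ContDiffOn ℝ 1 ν₂ Ω)
    (hunit : ∀ p ∈ Ω, ν₁ p ^ 2 + ν₂ p ^ 2 = 1)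
    (hmin : ∀ p ∈ Ω, Xop ν₁ p + Yop ν₂ p = 0)
    (I : Set ℝ) (hI : IsOpen I) (hconn : I.OrdConnected)
    (x y t : ℝ → ℝ)
    (hmem : ∀ s ∈ I, (x s, y s, t s) ∈ Ω)
    (hdx : ∀ s ∈ I, HasDerivAt x (-(ν₂ (x s, y s, t s))) s)
    (hdy : ∀ s ∈ I, HasDerivAt y (ν₁ (x s, y s, t s)) s)
    (hdt : ∀ s ∈ I, HasDerivAt t
      (2 * (y s * (-(ν₂ (x s, y s, t s))) - x s * ν₁ (x s, y s, t s))) s) :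
    ∀ s ∈ I, ∀ s₀ ∈ I,
      x s = x s₀ + (s - s₀) * deriv x s₀ ∧
      y s = y s₀ + (s - s₀) * deriv y s₀ ∧
      t s = t s₀ + (s - s₀) * deriv t s₀ := by
  -- differentiability of ν₁, ν₂ on Ω
  have hd₁ : ∀ p ∈ Ω, HasFDerivAt ν₁ (fderiv ℝ ν₁ p) p := fun p hp =>
    (((hν₁.differentiableOn one_ne_zero).differentiableAt (hΩ.mem_nhds hp)).hasFDerivAt)
  have hd₂ : ∀ p ∈ Ω, HasFDerivAt ν₂ (fderiv ℝ ν₂ p) p := fun p hp =>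
    (((hν₂.differentiableOn one_ne_zero).differentiableAt (hΩ.mem_nhds hp)).hasFDerivAt)
  -- the curve
  set γ : ℝ → ℝ × ℝ × ℝ := fun s => (x s, y s, t s) with hγdef
  -- derivative of the curve
  have hγ : ∀ s ∈ I, HasDerivAt γ
      (-(ν₂ (γ s)), ν₁ (γ s),
        2 * (y s * (-(ν₂ (γ s))) - x s * ν₁ (γ s))) s := fun s hs =>
    ((hdx s hs).prodMk ((hdy s hs).prodMk (hdt s hs)))
  -- ν₁ ∘ γ and ν₂ ∘ γ have zero derivative
  have hkey : ∀ s ∈ I, HasDerivAt (fun σ => ν₁ (γ σ)) 0 s ∧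
      HasDerivAt (fun σ => ν₂ (γ σ)) 0 s := by
    intro s hs
    set p : ℝ × ℝ × ℝ := γ s with hpdef
    have hp : p ∈ Ω := hmem s hs
    set A₁ := fderiv ℝ ν₁ p with hA₁def
    set A₂ := fderiv ℝ ν₂ p with hA₂def
    have hA₁ : HasFDerivAt ν₁ A₁ p := hd₁ p hp
    have hA₂ : HasFDerivAt ν₂ A₂ p := hd₂ p hp
    -- unit condition differentiated in the x and t and y directions
    have hex : ν₁ p * A₁ (1, 0, 0) + ν₂ p * A₂ (1, 0, 0) = 0 :=
      unit_dir hΩ hunit (c := fun a => (a, p.2.1, p.2.2)) (a₀ := p.1) hp hA₁ hA₂ (curve1 p)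
    have hey : ν₁ p * A₁ (0, 1, 0) + ν₂ p * A₂ (0, 1, 0) = 0 :=
      unit_dir hΩ hunit (c := fun a => (p.1, a, p.2.2)) (a₀ := p.2.1) hp hA₁ hA₂ (curve2 p)
    have het : ν₁ p * A₁ (0, 0, 1) + ν₂ p * A₂ (0, 0, 1) = 0 :=
      unit_dir hΩ hunit (c := fun a => (p.1, p.2.1, a)) (a₀ := p.2.2) hp hA₁ hA₂ (curve3 p)
    -- minimal surface equation in terms of A₁, A₂
    have hm : A₁ (1, 0, 0) + 2 * p.2.1 * A₁ (0, 0, 1)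
        + (A₂ (0, 1, 0) - 2 * p.1 * A₂ (0, 0, 1)) = 0 := by
      have := hmin p hp
      rwa [Xop_eq hA₁, Yop_eq hA₂] at this
    have hu' : HasDerivAt (fun σ => ν₁ (γ σ))
        (A₁ (-(ν₂ p), ν₁ p, 2 * (y s * (-(ν₂ p)) - x s * ν₁ p))) s :=
      hA₁.comp_hasDerivAt s (hγ s hs)
    have hv' : HasDerivAt (fun σ => ν₂ (γ σ))
        (A₂ (-(ν₂ p), ν₁ p, 2 * (y s * (-(ν₂ p)) - x s * ν₁ p))) s :=
      hA₂.comp_hasDerivAt s (hγ s hs)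
    have hpx : p.1 = x s := rfl
    have hpy : p.2.1 = y s := rfl
    constructor
    · convert hu' using 1
      rw [clm_apply3]
      rw [hpx, hpy] at hm
      linear_combination -hey + 2 * x s * het + ν₂ p * hm
    · convert hv' using 1
      rw [clm_apply3]
      rw [hpx, hpy] at hm
      linear_combination hex + 2 * y s * het - ν₁ p * hm
  -- hence ν₁ ∘ γ and ν₂ ∘ γ are constant on I
  have hucon : ∀ s ∈ I, ∀ s₀ ∈ I, ν₁ (γ s) = ν₁ (γ s₀) :=
    const_of_deriv_zero hconn (fun s hs => (hkey s hs).1)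
  have hvcon : ∀ s ∈ I, ∀ s₀ ∈ I, ν₂ (γ s) = ν₂ (γ s₀) :=
    const_of_deriv_zero hconn (fun s hs => (hkey s hs).2)
  intro s hs s₀ hs₀
  -- x and y are affine
  have hx' : ∀ σ ∈ I, HasDerivAt x (-(ν₂ (γ s₀))) σ := by
    intro σ hσ
    have := hdx σ hσ
    rwa [show ν₂ (x σ, y σ, t σ) = ν₂ (γ s₀) from hvcon σ hσ s₀ hs₀] at this
  have hy' : ∀ σ ∈ I, HasDerivAt y (ν₁ (γ s₀)) σ := by
    intro σ hσ
    have := hdy σ hσ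
    rwa [show ν₁ (x σ, y σ, t σ) = ν₁ (γ s₀) from hucon σ hσ s₀ hs₀] at this
  have hxlin := linear_of_deriv_const hconn hx'
  have hylin := linear_of_deriv_const hconn hy'
  have hdxs₀ : deriv x s₀ = -(ν₂ (γ s₀)) := (hx' s₀ hs₀).deriv
  have hdys₀ : deriv y s₀ = ν₁ (γ s₀) := (hy' s₀ hs₀).deriv
  refine ⟨by rw [hdxs₀]; exact hxlin s hs s₀ hs₀,
          by rw [hdys₀]; exact hylin s hs s₀ hs₀, ?_⟩
  -- t is affine
  set ct : ℝ := 2 * (y s₀ * (-(ν₂ (γ s₀))) - x s₀ * ν₁ (γ s₀)) with hctdef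
  have ht' : ∀ σ ∈ I, HasDerivAt t ct σ := by
    intro σ hσ
    have h := hdt σ hσ
    have e1 : ν₂ (x σ, y σ, t σ) = ν₂ (γ s₀) := hvcon σ hσ s₀ hs₀
    have e2 : ν₁ (x σ, y σ, t σ) = ν₁ (γ s₀) := hucon σ hσ s₀ hs₀
    have e3 : x σ = x s₀ + (σ - s₀) * (-(ν₂ (γ s₀))) := hxlin σ hσ s₀ hs₀
    have e4 : y σ = y s₀ + (σ - s₀) * ν₁ (γ s₀) := hylin σ hσ s₀ hs₀
    rw [e1, e2, e3, e4] at h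
    convert h using 1
    rw [hctdef]; ring
  have hdts₀ : deriv t s₀ = ct := (ht' s₀ hs₀).deriv
  rw [hdts₀]
  exact linear_of_deriv_const hconn ht' s hs s₀ hs₀
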